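/- If σ_n² = n·ℓ(n) where ℓ is slowly varying at infinity, then ‖V_n g‖ = o(σ_n) as n → ∞. -/

import Mathlib

open MeasureTheory Filter Finset Topology
open scoped RealInnerProductSpace

namespace CLTAux

variable {E : Type*} [NormedAddCommGroup E] [InnerProductSpace ℝ E]

noncomputable def aa (Q : E →L[ℝ] E) (g : E) (i : ℕ) : ℝ := ⟪g, (Q ^ i) g⟫

noncomputable def vv (Q : E →L[ℝ] E) (g : E) (n : ℕ) : E := ∑ k ∈ Finset.range n, (Q ^ k) g

noncomputable def ss (Q : E →L[ℝ] E) (g : E) (k : ℕ) : ℝ := ∑ i ∈ Finset.range k, aa Q g i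

noncomputable def ff (Q : E →L[ℝ] E) (x y : E) : ℝ := ⟪x, y⟫ - ⟪Q x, Q y⟫

variable (Q : E →L[ℝ] E) (g : E)

lemma pow_inner (hsa : ∀ x y : E, ⟪Q x, y⟫ = ⟪x, Q y⟫) :
    ∀ (i : ℕ) (x y : E), ⟪(Q ^ i) x, y⟫ = ⟪x, (Q ^ i) y⟫ := by
  intro i
  induction i with
  | zero => intro x y; simp
  | succ n ih =>
    intro x y
    have h1 : (Q ^ (n + 1)) x = (Q ^ n) (Q x) := by rw [pow_succ]; rfl
    have h2 : (Q ^ (n + 1)) y = Q ((Q ^ n) y) := by rw [pow_succ']; rfl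
    rw [h1, h2, ih (Q x) y, hsa]

lemma pow_norm (hQ : ‖Q‖ ≤ 1) : ∀ (i : ℕ) (x : E), ‖(Q ^ i) x‖ ≤ ‖x‖ := by
  intro i
  induction i with
  | zero => intro x; simp
  | succ n ih =>
    intro x
    have h1 : (Q ^ (n + 1)) x = (Q ^ n) (Q x) := by rw [pow_succ]; rfl
    rw [h1]
    refine (ih (Q x)).trans ?_
    calc ‖Q x‖ ≤ ‖Q‖ * ‖x‖ := Q.le_opNorm x
    _ ≤ 1 * ‖x‖ := mul_le_mul_of_nonneg_right hQ (norm_nonneg x)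
    _ = ‖x‖ := one_mul _

lemma Q_norm (hQ : ‖Q‖ ≤ 1) (x : E) : ‖Q x‖ ≤ ‖x‖ := by
  have := pow_norm Q hQ 1 x
  rwa [pow_one] at this

lemma inner_pow_pow (hsa : ∀ x y : E, ⟪Q x, y⟫ = ⟪x, Q y⟫) (j k : ℕ) :
    ⟪(Q ^ j) g, (Q ^ k) g⟫ = aa Q g (j + k) := by
  rw [pow_inner Q hsa j]
  unfold aa
  rw [← ContinuousLinearMap.mul_apply, ← pow_add]

lemma aa_zero : aa Q g 0 = ‖g‖ ^ 2 := by
  simp [aa, real_inner_self_eq_norm_sq]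

lemma aa_abs (hQ : ‖Q‖ ≤ 1) (i : ℕ) : |aa Q g i| ≤ ‖g‖ ^ 2 := by
  have h1 := abs_real_inner_le_norm g ((Q ^ i) g)
  have h2 := pow_norm Q hQ i g
  unfold aa
  nlinarith [norm_nonneg g]

lemma ss_succ (k : ℕ) : ss Q g (k + 1) = ss Q g k + aa Q g k := Finset.sum_range_succ _ _

lemma inner_vv (k : ℕ) : ⟪g, vv Q g k⟫ = ss Q g k := by
  unfold vv ss aa
  rw [inner_sum]

lemma vv_succ (n : ℕ) : vv Q g (n + 1) = vv Q g n + (Q ^ n) g := Finset.sum_range_succ _ _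

lemma vv_zero : vv Q g 0 = 0 := by simp [vv]

lemma vv_one : vv Q g 1 = g := by simp [vv]

lemma Q_vv (m : ℕ) : Q (vv Q g m) = vv Q g (m + 1) - g := by
  unfold vv
  rw [map_sum, Finset.sum_range_succ' (fun k => (Q ^ k) g) m]
  simp only [pow_zero, ContinuousLinearMap.one_apply, add_sub_cancel_right]
  refine Finset.sum_congr rfl fun k _ => ?_
  rw [pow_succ']
  rfl

lemma ss_split (p q : ℕ) : ss Q g (p + q) = ss Q g p + ∑ j ∈ Finset.range q, aa Q g (p + j) := by
  induction q with
  | zero => simp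
  | succ q ih =>
    rw [← Nat.add_assoc, ss_succ, ih, Finset.sum_range_succ]
    ring

lemma inner_Qn_vv (hsa : ∀ x y : E, ⟪Q x, y⟫ = ⟪x, Q y⟫) (n : ℕ) :
    ⟪(Q ^ n) g, vv Q g n⟫ = ss Q g (2 * n) - ss Q g n := by
  unfold vv
  rw [inner_sum]
  rw [Finset.sum_congr rfl fun j _ => inner_pow_pow Q g hsa n j]
  have h2 := ss_split Q g n n
  rw [two_mul]
  linarith

lemma ff_nonneg (hQ : ‖Q‖ ≤ 1) (x : E) : 0 ≤ ff Q x x := by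
  unfold ff
  rw [real_inner_self_eq_norm_sq, real_inner_self_eq_norm_sq]
  have h := Q_norm Q hQ x
  nlinarith [norm_nonneg (Q x)]

lemma ff_expand (x y : E) (t : ℝ) :
    ff Q (x + t • y) (x + t • y) = ff Q x x + 2 * t * ff Q x y + t ^ 2 * ff Q y y := by
  unfold ff
  simp only [map_add, _root_.map_smul, real_inner_add_add_self, real_inner_smul_left,
    real_inner_smul_right]
  ring

lemma ff_cs (hQ : ‖Q‖ ≤ 1) (x y : E) : (ff Q x y) ^ 2 ≤ ff Q x x * ff Q y y := by
  have key : ∀ t : ℝ, 0 ≤ ff Q y y * (t * t) + (2 * ff Q x y) * t + ff Q x x := by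
    intro t
    have h := ff_nonneg Q hQ (x + t • y)
    rw [ff_expand] at h
    nlinarith [h]
  have hd := discrim_le_zero key
  rw [discrim] at hd
  nlinarith [hd]

lemma ff_pair (hQ : ‖Q‖ ≤ 1) (x y : E) : 2 * ff Q x y ≤ ff Q x x + ff Q y y := by
  have h := ff_nonneg Q hQ (x - y)
  unfold ff at *
  simp only [map_sub] at h
  rw [real_inner_sub_sub_self, real_inner_sub_sub_self] at h
  linarith

lemma ff_comm (x y : E) : ff Q x y = ff Q y x := by
  unfold ff
  rw [real_inner_comm, real_inner_comm (Q x)]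

lemma ff_sum (s : Finset ℕ) (y : ℕ → E) (x : E) :
    ff Q x (∑ m ∈ s, y m) = ∑ m ∈ s, ff Q x (y m) := by
  unfold ff
  rw [map_sum, inner_sum, inner_sum, ← Finset.sum_sub_distrib]

lemma ff_sum_sum (hQ : ‖Q‖ ≤ 1) (s : Finset ℕ) (y : ℕ → E) :
    ff Q (∑ m ∈ s, y m) (∑ m ∈ s, y m) ≤ s.card * ∑ m ∈ s, ff Q (y m) (y m) := by
  rw [ff_sum]
  have step1 : ∀ m ∈ s, ff Q (∑ m' ∈ s, y m') (y m) = ∑ m' ∈ s, ff Q (y m) (y m') := by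
    intro m _
    rw [ff_comm, ff_sum]
  rw [Finset.sum_congr rfl step1]
  calc ∑ m ∈ s, ∑ m' ∈ s, ff Q (y m) (y m')
      ≤ ∑ m ∈ s, ∑ m' ∈ s, (ff Q (y m) (y m) + ff Q (y m') (y m')) / 2 := by
        refine Finset.sum_le_sum fun m _ => Finset.sum_le_sum fun m' _ => ?_
        have := ff_pair Q hQ (y m) (y m')
        linarith
    _ = s.card * ∑ m ∈ s, ff Q (y m) (y m) := by
        simp only [add_div, Finset.sum_add_distrib, Finset.sum_const, nsmul_eq_mul,
          ← Finset.sum_div, ← Finset.sum_mul, ← Finset.mul_sum]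
        ring

set_option maxHeartbeats 1000000 in
lemma growth_arith {n c L u B G F : ℝ} (hn1 : 1 ≤ n) (hGc : G ^ 2 = c)
    (hGnn : 0 ≤ G) (hunn : 0 ≤ u) (hBnn : 0 ≤ B) (hu2B : u ^ 2 ≤ B) (hcpos : 0 < c)
    (hLnn : 0 ≤ L) (hFlb : n * L - 2 * G * u ≤ F) (hF2 : F ^ 2 ≤ 2 * c * (n * B)) :
    L ^ 2 / (16 * c) * n ≤ B := by
  have hNnn : (0:ℝ) ≤ n := le_trans zero_le_one hn1
  have hXnn : 0 ≤ n * L := mul_nonneg hNnn hLnn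
  have hFu : n * L ≤ F + 2 * G * u := by linarith
  have s2 : (n * L) ^ 2 ≤ (F + 2 * G * u) ^ 2 := by
    have h0 : 0 ≤ F + 2 * G * u := le_trans hXnn hFu
    nlinarith [hFu, hXnn, h0]
  have P2 : n ^ 3 * L ^ 2 ≤ n * (F + 2 * G * u) ^ 2 := by
    nlinarith [mul_le_mul_of_nonneg_left s2 hNnn]
  have A1 : 4 * (n * G * u) * F ≤ 2 * F ^ 2 + 2 * (n * G * u) ^ 2 := by
    nlinarith [sq_nonneg (F - n * G * u)]
  have A2 : n * F ^ 2 ≤ 2 * c * n ^ 2 * B := by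
    nlinarith [mul_le_mul_of_nonneg_left hF2 hNnn]
  have A3 : 2 * (n * G * u) ^ 2 ≤ 2 * (n ^ 2 * c * B) := by
    have he : (n * G * u) ^ 2 = n ^ 2 * c * u ^ 2 := by rw [← hGc]; ring
    have h1 : n ^ 2 * c * u ^ 2 ≤ n ^ 2 * c * B :=
      mul_le_mul_of_nonneg_left hu2B (by positivity)
    nlinarith [he, h1]
  have A4 : 4 * n * (c * u ^ 2) ≤ 4 * (n * (c * B)) := by
    have h1 : c * u ^ 2 ≤ c * B := mul_le_mul_of_nonneg_left hu2B hcpos.le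
    nlinarith [mul_le_mul_of_nonneg_left h1 hNnn]
  have A5 : 2 * F ^ 2 ≤ 4 * c * (n * B) := by linarith
  have A6 : 8 * (n * (c * B)) ≤ 8 * (n ^ 2 * c * B) := by
    nlinarith [hn1, mul_nonneg hcpos.le hBnn]
  have Texp : n * (F + 2 * G * u) ^ 2
      = n * F ^ 2 + 4 * (n * G * u) * F + 4 * n * (c * u ^ 2) := by
    rw [← hGc]; ring
  have s4 : n ^ 3 * L ^ 2 ≤ 12 * (n ^ 2 * c * B) := by linarith [P2, A1, A2, A3, A4, A5, A6, Texp.le, Texp.ge]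
  have hn2 : (0:ℝ) < n ^ 2 := by positivity
  have s5 : n * L ^ 2 ≤ 12 * (c * B) := by
    have h := s4
    rw [show n ^ 3 * L ^ 2 = n ^ 2 * (n * L ^ 2) from by ring,
      show 12 * (n ^ 2 * c * B) = n ^ 2 * (12 * (c * B)) from by ring] at h
    exact (mul_le_mul_iff_right₀ hn2).mp h
  rw [div_mul_eq_mul_div, div_le_iff₀ (by positivity : (0:ℝ) < 16 * c)]
  nlinarith [s5, hBnn, hcpos.le, hn1, mul_nonneg hcpos.le hBnn]

end CLTAux


set_option maxHeartbeats 1000000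

/-- if `σ_n² = n ℓ(n)` with `ℓ` slowly varying at infinity, then
`‖V_n g‖ = o(σ_n)`, where `V_n = I + Q + ⋯ + Q^{n-1}` for a self-adjoint
contraction `Q` and `σ_n² = n‖g‖² + 2∑_{i=1}^{n-1}(n-i)⟨g, Qⁱ g⟩`. -/
theorem norm_Vn_g_little_o_of_sigma
    {E : Type*} [NormedAddCommGroup E] [InnerProductSpace ℝ E]
    (Q : E →L[ℝ] E) (hsa : ∀ x y : E, ⟪Q x, y⟫ = ⟪x, Q y⟫) (hQ : ‖Q‖ ≤ 1)
    (g : E) (σsq : ℕ → ℝ)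
    (hσ : ∀ n : ℕ, σsq n
      = n * ‖g‖ ^ 2 + 2 * ∑ i ∈ Finset.Ico 1 n, ((n : ℝ) - i) * ⟪g, (Q ^ i) g⟫)
    (ℓ : ℝ → ℝ) (hℓpos : ∀ x : ℝ, 0 < x → 0 < ℓ x)
    (hslow : ∀ t : ℝ, 0 < t → Tendsto (fun x : ℝ => ℓ (t * x) / ℓ x) atTop (𝓝 1))
    (hvar : ∀ n : ℕ, σsq n = n * ℓ n) :
    Tendsto (fun n : ℕ => ‖(∑ k ∈ Finset.range n, Q ^ k) g‖ / Real.sqrt (σsq n))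
      atTop (𝓝 0) := by
  classical
  -- σsq via full range sum
  have hb_range : ∀ n : ℕ, σsq n
      = 2 * (∑ i ∈ Finset.range n, ((n : ℝ) - i) * CLTAux.aa Q g i) - n * ‖g‖ ^ 2 := by
    intro n
    rcases Nat.eq_zero_or_pos n with h0 | hpos
    · subst h0; simpa using hσ 0
    · rw [hσ n, Finset.range_eq_Ico, Finset.sum_eq_sum_Ico_succ_bot hpos]
      simp only [CLTAux.aa, Nat.cast_zero, sub_zero, pow_zero,
        ContinuousLinearMap.one_apply, real_inner_self_eq_norm_sq]
      ring
  have hBsum : ∀ n : ℕ, ∑ k ∈ Finset.range n, CLTAux.ss Q g (k + 1)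
      = ∑ i ∈ Finset.range n, ((n : ℝ) - i) * CLTAux.aa Q g i := by
    intro n
    induction n with
    | zero => simp
    | succ n ih =>
      rw [Finset.sum_range_succ, ih]
      have hre : ∀ i ∈ Finset.range (n + 1), (((n + 1 : ℕ) : ℝ) - i) * CLTAux.aa Q g i
          = ((n : ℝ) - i) * CLTAux.aa Q g i + CLTAux.aa Q g i := by
        intro i _
        push_cast
        ring
      rw [Finset.sum_congr rfl hre, Finset.sum_add_distrib,
        Finset.sum_range_succ (fun i => ((n : ℝ) - i) * CLTAux.aa Q g i)]
      have : CLTAux.ss Q g (n + 1) = ∑ i ∈ Finset.range (n + 1), CLTAux.aa Q g i := rfl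
      rw [this]
      simp
  have hb_tele : ∀ n : ℕ, σsq n
      = ∑ k ∈ Finset.range n, (2 * CLTAux.ss Q g (k + 1) - ‖g‖ ^ 2) := by
    intro n
    rw [Finset.sum_sub_distrib, Finset.sum_const, ← Finset.mul_sum, hBsum,
      Finset.card_range, nsmul_eq_mul, hb_range]
  have hdiff : ∀ n : ℕ, σsq (n + 1) = σsq n + (2 * CLTAux.ss Q g (n + 1) - ‖g‖ ^ 2) := by
    intro n
    rw [hb_tele (n + 1), hb_tele n, Finset.sum_range_succ]
  have hb0 : σsq 0 = 0 := by simpa using hσ 0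
  have hss0 : CLTAux.ss Q g 0 = 0 := by simp [CLTAux.ss]
  have hss1 : CLTAux.ss Q g 1 = ‖g‖ ^ 2 := by
    simp [CLTAux.ss, Finset.sum_range_one, CLTAux.aa_zero]
  have hb1 : σsq 1 = ‖g‖ ^ 2 := by
    have h := hdiff 0
    rw [hb0, hss1] at h
    linarith
  have hss2 : CLTAux.ss Q g 2 = ‖g‖ ^ 2 + CLTAux.aa Q g 1 := by
    have := CLTAux.ss_succ Q g 1
    rw [hss1] at this
    linarith [this]
  have hb2 : σsq 2 = 2 * (‖g‖ ^ 2 + CLTAux.aa Q g 1) := by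
    have h := hdiff 1
    rw [hb1, hss2] at h
    linarith
  have hcpos : 0 < ‖g‖ ^ 2 := by
    have h := hvar 1
    have h2 := hℓpos 1 one_pos
    rw [hb1] at h
    simp at h
    rw [h]
    exact h2
  have hLpos : 0 < ‖g‖ ^ 2 + CLTAux.aa Q g 1 := by
    have h := hvar 2
    have h2 := hℓpos 2 two_pos
    have h3 : ((2:ℕ):ℝ) = 2 := by norm_num
    rw [hb2, h3] at h
    linarith [h, h2]
  -- telescoping: sum of w equals σsq n - ‖vv n‖²
  have hweq : ∀ m : ℕ, ‖CLTAux.vv Q g m‖ ^ 2 - ‖Q (CLTAux.vv Q g m)‖ ^ 2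
      = (‖CLTAux.vv Q g m‖ ^ 2 - ‖CLTAux.vv Q g (m + 1)‖ ^ 2) + (σsq (m + 1) - σsq m) := by
    intro m
    rw [CLTAux.Q_vv, norm_sub_sq_real, real_inner_comm, CLTAux.inner_vv, hdiff m]
    ring
  have hwnn : ∀ m : ℕ, 0 ≤ ‖CLTAux.vv Q g m‖ ^ 2 - ‖Q (CLTAux.vv Q g m)‖ ^ 2 := by
    intro m
    have h := CLTAux.Q_norm Q hQ (CLTAux.vv Q g m)
    nlinarith [norm_nonneg (Q (CLTAux.vv Q g m))]
  have hsumw : ∀ n : ℕ, ∑ m ∈ Finset.range n,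
      (‖CLTAux.vv Q g m‖ ^ 2 - ‖Q (CLTAux.vv Q g m)‖ ^ 2) = σsq n - ‖CLTAux.vv Q g n‖ ^ 2 := by
    intro n
    induction n with
    | zero => simp [CLTAux.vv_zero, hb0]
    | succ n ih =>
      rw [Finset.sum_range_succ, ih, hweq n]
      ring
  have hu2b : ∀ n : ℕ, ‖CLTAux.vv Q g n‖ ^ 2 ≤ σsq n := by
    intro n
    have h := hsumw n
    have h2 : 0 ≤ σsq n - ‖CLTAux.vv Q g n‖ ^ 2 := by
      rw [← h]
      exact Finset.sum_nonneg fun m _ => hwnn m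
    linarith
  -- ff g (vv m)
  have hffg : ∀ m : ℕ, CLTAux.ff Q g (CLTAux.vv Q g m)
      = ‖g‖ ^ 2 + CLTAux.aa Q g 1 - CLTAux.aa Q g m - CLTAux.aa Q g (m + 1) := by
    intro m
    induction m with
    | zero =>
      rw [CLTAux.vv_zero]
      simp [CLTAux.ff, CLTAux.aa_zero]
    | succ m ih =>
      rw [CLTAux.vv_succ]
      have hadd : CLTAux.ff Q g (CLTAux.vv Q g m + (Q ^ m) g)
          = CLTAux.ff Q g (CLTAux.vv Q g m) + CLTAux.ff Q g ((Q ^ m) g) := by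
        unfold CLTAux.ff
        rw [map_add, inner_add_right, inner_add_right]
        ring
      have h2 : CLTAux.ff Q g ((Q ^ m) g) = CLTAux.aa Q g m - CLTAux.aa Q g (m + 2) := by
        unfold CLTAux.ff
        have e1 : (inner ℝ g ((Q ^ m) g) : ℝ) = CLTAux.aa Q g m := rfl
        have e2 : (inner ℝ (Q g) (Q ((Q ^ m) g)) : ℝ) = CLTAux.aa Q g (m + 2) := by
          have hq1 : Q g = (Q ^ 1) g := by rw [pow_one]
          have hqm : Q ((Q ^ m) g) = (Q ^ (m + 1)) g := by rw [pow_succ']; rfl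
          rw [hq1, hqm, CLTAux.inner_pow_pow Q g hsa 1 (m + 1)]
          congr 1
          omega
        rw [e1, e2]
      rw [hadd, ih, h2]
      ring
  have hffZ : ∀ n : ℕ, CLTAux.ff Q g (∑ m ∈ Finset.range n, CLTAux.vv Q g m)
      = n * (‖g‖ ^ 2 + CLTAux.aa Q g 1) + ‖g‖ ^ 2
        - CLTAux.ss Q g n - CLTAux.ss Q g (n + 1) := by
    intro n
    rw [CLTAux.ff_sum, Finset.sum_congr rfl fun m _ => hffg m]
    have h1 : ∑ m ∈ Finset.range n, CLTAux.aa Q g m = CLTAux.ss Q g n := rfl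
    have h2 : ∑ m ∈ Finset.range n, CLTAux.aa Q g (m + 1) = CLTAux.ss Q g (n + 1) - ‖g‖ ^ 2 := by
      have h3 := Finset.sum_range_succ' (CLTAux.aa Q g) n
      have h4 : CLTAux.ss Q g (n + 1) = ∑ i ∈ Finset.range (n + 1), CLTAux.aa Q g i := rfl
      rw [h4, h3, CLTAux.aa_zero]
      ring
    simp only [Finset.sum_sub_distrib, Finset.sum_const, Finset.card_range, nsmul_eq_mul]
    rw [h1, h2]
    ring
  -- the growth bound
  have hgrow : ∀ n : ℕ,
      (‖g‖ ^ 2 + CLTAux.aa Q g 1) ^ 2 / (16 * ‖g‖ ^ 2) * n ≤ σsq n := by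
    intro n
    rcases Nat.eq_zero_or_pos n with h0 | hpos
    · subst h0; simp [hb0]
    · have hn1 : (1 : ℝ) ≤ (n : ℝ) := by exact_mod_cast hpos
      have hsn : CLTAux.ss Q g n ≤ ‖g‖ * ‖CLTAux.vv Q g n‖ := by
        rw [← CLTAux.inner_vv]
        exact real_inner_le_norm g _
      have hsn1 : CLTAux.ss Q g (n + 1) ≤ ‖g‖ * (‖CLTAux.vv Q g n‖ + ‖g‖) := by
        rw [← CLTAux.inner_vv]
        refine le_trans (real_inner_le_norm g _) ?_
        have h5 : ‖CLTAux.vv Q g (n + 1)‖ ≤ ‖CLTAux.vv Q g n‖ + ‖g‖ := by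
          rw [CLTAux.vv_succ]
          refine le_trans (norm_add_le _ _) ?_
          linarith [CLTAux.pow_norm Q hQ n g]
        exact mul_le_mul_of_nonneg_left h5 (norm_nonneg g)
      have hFlb : (n : ℝ) * (‖g‖ ^ 2 + CLTAux.aa Q g 1) - 2 * ‖g‖ * ‖CLTAux.vv Q g n‖
          ≤ CLTAux.ff Q g (∑ m ∈ Finset.range n, CLTAux.vv Q g m) := by
        rw [hffZ n]
        nlinarith [hsn, hsn1]
      have hffgg : CLTAux.ff Q g g = ‖g‖ ^ 2 - CLTAux.aa Q g 2 := by
        unfold CLTAux.ff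
        have e1 : (inner ℝ g g : ℝ) = ‖g‖ ^ 2 := real_inner_self_eq_norm_sq g
        have e2 : (inner ℝ (Q g) (Q g) : ℝ) = CLTAux.aa Q g 2 := by
          have hq1 : Q g = (Q ^ 1) g := by rw [pow_one]
          rw [hq1, CLTAux.inner_pow_pow Q g hsa 1 1]
        rw [e1, e2]
      have hffgg2 : CLTAux.ff Q g g ≤ 2 * ‖g‖ ^ 2 := by
        rw [hffgg]
        have h6 := abs_le.mp (CLTAux.aa_abs Q g hQ 2)
        linarith [h6.1]
      have hffggnn : 0 ≤ CLTAux.ff Q g g := CLTAux.ff_nonneg Q hQ g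
      have hffv : ∀ m : ℕ, CLTAux.ff Q (CLTAux.vv Q g m) (CLTAux.vv Q g m)
          = ‖CLTAux.vv Q g m‖ ^ 2 - ‖Q (CLTAux.vv Q g m)‖ ^ 2 := by
        intro m
        unfold CLTAux.ff
        rw [real_inner_self_eq_norm_sq, real_inner_self_eq_norm_sq]
      have hZZ : CLTAux.ff Q (∑ m ∈ Finset.range n, CLTAux.vv Q g m)
          (∑ m ∈ Finset.range n, CLTAux.vv Q g m) ≤ (n : ℝ) * σsq n := by
        refine le_trans (CLTAux.ff_sum_sum Q hQ (Finset.range n) (CLTAux.vv Q g)) ?_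
        rw [Finset.sum_congr rfl fun m _ => hffv m, hsumw n, Finset.card_range]
        have h9 : σsq n - ‖CLTAux.vv Q g n‖ ^ 2 ≤ σsq n := by
          nlinarith [sq_nonneg ‖CLTAux.vv Q g n‖]
        exact mul_le_mul_of_nonneg_left h9 (by positivity)
      have hZZnn : 0 ≤ CLTAux.ff Q (∑ m ∈ Finset.range n, CLTAux.vv Q g m)
          (∑ m ∈ Finset.range n, CLTAux.vv Q g m) := CLTAux.ff_nonneg Q hQ _
      have hF2 : (CLTAux.ff Q g (∑ m ∈ Finset.range n, CLTAux.vv Q g m)) ^ 2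
          ≤ 2 * ‖g‖ ^ 2 * ((n : ℝ) * σsq n) := by
        refine le_trans (CLTAux.ff_cs Q hQ g _) ?_
        exact mul_le_mul hffgg2 hZZ hZZnn (by positivity)
      exact CLTAux.growth_arith hn1 rfl (norm_nonneg g) (norm_nonneg _)
        (le_trans (sq_nonneg _) (hu2b n)) (hu2b n) hcpos hLpos.le hFlb hF2
  -- the doubling identity
  have hvnorm2 : ∀ n : ℕ, ‖CLTAux.vv Q g (n + 1)‖ ^ 2
      = ‖CLTAux.vv Q g n‖ ^ 2 + 2 * (CLTAux.ss Q g (2 * n) - CLTAux.ss Q g n)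
        + CLTAux.aa Q g (2 * n) := by
    intro n
    rw [CLTAux.vv_succ, norm_add_sq_real]
    have e1 : (inner ℝ (CLTAux.vv Q g n) ((Q ^ n) g) : ℝ)
        = CLTAux.ss Q g (2 * n) - CLTAux.ss Q g n := by
      rw [real_inner_comm, CLTAux.inner_Qn_vv Q g hsa n]
    have e2 : ‖(Q ^ n) g‖ ^ 2 = CLTAux.aa Q g (2 * n) := by
      rw [← real_inner_self_eq_norm_sq, CLTAux.inner_pow_pow Q g hsa n n, two_mul]
    rw [e1, e2]
  have hident : ∀ n : ℕ, σsq (2 * n)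
      = 2 * σsq n + 2 * ‖CLTAux.vv Q g n‖ ^ 2 - 4 * CLTAux.ss Q g n
        + 2 * CLTAux.ss Q g (2 * n) := by
    intro n
    induction n with
    | zero => simp [hb0, CLTAux.vv_zero, hss0]
    | succ n ih =>
      have hidx : 2 * (n + 1) = (2 * n + 1) + 1 := by ring
      have d1 : σsq (2 * n + 1) = σsq (2 * n)
          + (2 * CLTAux.ss Q g (2 * n + 1) - ‖g‖ ^ 2) := hdiff (2 * n)
      have d2 : σsq ((2 * n + 1) + 1) = σsq (2 * n + 1)
          + (2 * CLTAux.ss Q g ((2 * n + 1) + 1) - ‖g‖ ^ 2) := hdiff (2 * n + 1)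
      have d3 : σsq (n + 1) = σsq n + (2 * CLTAux.ss Q g (n + 1) - ‖g‖ ^ 2) := hdiff n
      have s1 : CLTAux.ss Q g (n + 1) = CLTAux.ss Q g n + CLTAux.aa Q g n :=
        CLTAux.ss_succ Q g n
      have s2 : CLTAux.ss Q g (2 * n + 1) = CLTAux.ss Q g (2 * n) + CLTAux.aa Q g (2 * n) :=
        CLTAux.ss_succ Q g (2 * n)
      have s3 : CLTAux.ss Q g ((2 * n + 1) + 1)
          = CLTAux.ss Q g (2 * n + 1) + CLTAux.aa Q g (2 * n + 1) :=
        CLTAux.ss_succ Q g (2 * n + 1)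
      have s4 : CLTAux.ss Q g (2 * (n + 1)) = CLTAux.ss Q g ((2 * n + 1) + 1) := by
        rw [hidx]
      have hv := hvnorm2 n
      rw [hidx, d2, d1, ih, s3, s2, d3, s1, hv]
      ring
  -- consequence: upper bound for ‖vv n‖² in terms of σsq(2n)
  have hfin : ∀ n : ℕ, ‖CLTAux.vv Q g n‖ ^ 2
      ≤ σsq (2 * n) / 2 - σsq n + 2 * ‖g‖ * ‖CLTAux.vv Q g n‖ := by
    intro n
    have h := hident n
    have hsnb : CLTAux.ss Q g n ≤ ‖g‖ * ‖CLTAux.vv Q g n‖ := by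
      rw [← CLTAux.inner_vv]
      exact real_inner_le_norm g _
    have htb : -(‖g‖ * ‖CLTAux.vv Q g n‖) ≤ CLTAux.ss Q g (2 * n) - CLTAux.ss Q g n := by
      rw [← CLTAux.inner_Qn_vv Q g hsa n]
      have h1 := abs_real_inner_le_norm ((Q ^ n) g) (CLTAux.vv Q g n)
      have h2 := CLTAux.pow_norm Q hQ n g
      have h3 := abs_le.mp h1
      have h4 : ‖(Q ^ n) g‖ * ‖CLTAux.vv Q g n‖ ≤ ‖g‖ * ‖CLTAux.vv Q g n‖ :=
        mul_le_mul_of_nonneg_right h2 (norm_nonneg _)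
      linarith [h3.1]
    linarith
  -- limit assembly
  have hvveq : ∀ n : ℕ, (∑ k ∈ Finset.range n, Q ^ k) g = CLTAux.vv Q g n := by
    intro n
    rw [CLTAux.vv, ContinuousLinearMap.sum_apply]
  have hρpos : 0 < (‖g‖ ^ 2 + CLTAux.aa Q g 1) ^ 2 / (16 * ‖g‖ ^ 2) := by positivity
  have hBtop : Tendsto (fun n : ℕ => σsq n) atTop atTop := by
    refine tendsto_atTop_mono (fun n => hgrow n) ?_
    exact (tendsto_natCast_atTop_atTop).const_mul_atTop hρpos
  have hc0 : Tendsto (fun n : ℕ => 4 * ‖g‖ ^ 2 / σsq n) atTop (𝓝 0) :=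
    Tendsto.div_atTop tendsto_const_nhds hBtop
  have hratio : Tendsto (fun n : ℕ => ℓ (2 * (n : ℝ)) / ℓ (n : ℝ) - 1) atTop (𝓝 0) := by
    have h := (hslow 2 two_pos).comp tendsto_natCast_atTop_atTop
    have h2 : Tendsto (fun n : ℕ => ℓ (2 * (n : ℝ)) / ℓ (n : ℝ)) atTop (𝓝 1) := h
    have := h2.sub_const 1
    simpa using this
  have hsq0 : Tendsto (fun n : ℕ => Real.sqrt (4 * ‖g‖ ^ 2 / σsq n)) atTop (𝓝 0) := by
    have h := (Real.continuous_sqrt.tendsto 0).comp hc0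
    simpa only [Function.comp_def, Real.sqrt_zero] using h
  have hDto : Tendsto (fun n : ℕ => (ℓ (2 * (n : ℝ)) / ℓ (n : ℝ) - 1)
      + Real.sqrt (4 * ‖g‖ ^ 2 / σsq n)) atTop (𝓝 0) := by
    have := hratio.add hsq0
    simpa using this
  have hsqrtD : Tendsto (fun n : ℕ => Real.sqrt ((ℓ (2 * (n : ℝ)) / ℓ (n : ℝ) - 1)
      + Real.sqrt (4 * ‖g‖ ^ 2 / σsq n))) atTop (𝓝 0) := by
    have h := (Real.continuous_sqrt.tendsto 0).comp hDto
    simpa only [Function.comp_def, Real.sqrt_zero] using h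
  refine squeeze_zero' ?_ ?_ hsqrtD
  · filter_upwards with n
    positivity
  · filter_upwards [eventually_ge_atTop 1] with n hn
    have hnR : (0:ℝ) < (n : ℝ) := by exact_mod_cast hn
    have hBpos : 0 < σsq n := by
      rw [hvar n]
      exact mul_pos hnR (hℓpos _ hnR)
    have hlpos : 0 < ℓ (n : ℝ) := hℓpos _ hnR
    rw [hvveq n]
    have key : (‖CLTAux.vv Q g n‖ / Real.sqrt (σsq n)) ^ 2
        ≤ (ℓ (2 * (n : ℝ)) / ℓ (n : ℝ) - 1) + Real.sqrt (4 * ‖g‖ ^ 2 / σsq n) := by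
      rw [div_pow, Real.sq_sqrt hBpos.le]
      have h1 := hfin n
      have h2 : σsq (2 * n) = 2 * (n : ℝ) * ℓ (2 * (n : ℝ)) := by
        rw [hvar (2 * n)]
        push_cast
        ring
      have h3 : σsq n = (n : ℝ) * ℓ (n : ℝ) := hvar n
      have h4 : (σsq (2 * n) / 2) / σsq n = ℓ (2 * (n : ℝ)) / ℓ (n : ℝ) := by
        rw [h2, h3]
        rw [show 2 * (n : ℝ) * ℓ (2 * (n : ℝ)) / 2 = (n : ℝ) * ℓ (2 * (n : ℝ)) from by ring]
        rw [mul_div_mul_left _ _ (ne_of_gt hnR)]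
      have h5 : 2 * ‖g‖ * ‖CLTAux.vv Q g n‖ / σsq n
          ≤ Real.sqrt (4 * ‖g‖ ^ 2 / σsq n) := by
        have hu : ‖CLTAux.vv Q g n‖ ≤ Real.sqrt (σsq n) :=
          (Real.le_sqrt (norm_nonneg _) hBpos.le).mpr (hu2b n)
        have hsqrtB : 0 < Real.sqrt (σsq n) := Real.sqrt_pos.mpr hBpos
        have he : Real.sqrt (4 * ‖g‖ ^ 2 / σsq n) = 2 * ‖g‖ / Real.sqrt (σsq n) := by
          rw [show 4 * ‖g‖ ^ 2 = (2 * ‖g‖) ^ 2 from by ring]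
          rw [Real.sqrt_div (sq_nonneg (2 * ‖g‖)), Real.sqrt_sq (by positivity : (0:ℝ) ≤ 2 * ‖g‖)]
        rw [he]
        rw [div_le_div_iff₀ hBpos hsqrtB]
        have hms := Real.mul_self_sqrt hBpos.le
        have hx : ‖CLTAux.vv Q g n‖ * Real.sqrt (σsq n) ≤ σsq n := by
          nlinarith [mul_le_mul_of_nonneg_right hu (Real.sqrt_nonneg (σsq n)), hms]
        nlinarith [mul_le_mul_of_nonneg_left hx (by positivity : (0:ℝ) ≤ 2 * ‖g‖)]
      have h6 : ‖CLTAux.vv Q g n‖ ^ 2 / σsq n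
          ≤ (σsq (2 * n) / 2 - σsq n + 2 * ‖g‖ * ‖CLTAux.vv Q g n‖) / σsq n :=
        (div_le_div_iff_of_pos_right hBpos).mpr h1
      have h7 : (σsq (2 * n) / 2 - σsq n + 2 * ‖g‖ * ‖CLTAux.vv Q g n‖) / σsq n
          = (σsq (2 * n) / 2) / σsq n - 1 + 2 * ‖g‖ * ‖CLTAux.vv Q g n‖ / σsq n := by
        field_simp
      rw [h7, h4] at h6
      linarith [h5, h6]
    have h0 : 0 ≤ ‖CLTAux.vv Q g n‖ / Real.sqrt (σsq n) := by positivity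
    calc ‖CLTAux.vv Q g n‖ / Real.sqrt (σsq n)
        = Real.sqrt ((‖CLTAux.vv Q g n‖ / Real.sqrt (σsq n)) ^ 2) := (Real.sqrt_sq h0).symm
      _ ≤ _ := Real.sqrt_le_sqrt key
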